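/- Let S be a compact metric space (or a compact subset of ℝ^d) and u: S × S → ℝ continuous. If the 2-player symmetric game with payoff u is extended transitive, then it has a symmetric pure strategy Nash equilibrium: there exists x* ∈ S with u(y, x*) ≤ u(x*, x*) for all y ∈ S. -/
import Mathlib

open Filter Topology

/-- Existence of ε-Nash equilibria from extended transitivity. -/
lemma epsNash_aux {S : Type*} [Nonempty S] (u : S → S → ℝ) (Φ : S → ℝ) (M : ℝ)
    (hM : ∀ x, |Φ x| ≤ M) (ε δ : ℝ) (hδ : 0 < δ)
    (h : ∀ x y : S, u y x - u x x > ε → Φ y - Φ x > δ) :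
    ∃ x : S, ∀ y, u y x ≤ u x x + ε := by
  by_contra hc
  push_neg at hc
  choose f hf using hc
  obtain ⟨x0⟩ := ‹Nonempty S›
  have key : ∀ k : ℕ, Φ x0 + k * δ ≤ Φ (f^[k] x0) := by
    intro k
    induction k with
    | zero => simp
    | succ k ih =>
      have h1 := hf (f^[k] x0)
      have h2 := h (f^[k] x0) (f (f^[k] x0)) (by linarith)
      rw [Function.iterate_succ_apply']
      push_cast
      linarith
  obtain ⟨k, hk⟩ := exists_nat_gt ((2 * M) / δ)
  have hk' : 2 * M < (k : ℝ) * δ := (div_lt_iff₀ hδ).mp hk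
  have h1 := abs_le.mp (hM x0)
  have h2 := abs_le.mp (hM (f^[k] x0))
  have := key k
  linarith [h1.1, h2.2]

/-- An extended transitive 2-player symmetric game with continuous payoff on a
compact metric strategy space has a symmetric pure strategy Nash equilibrium. -/
theorem stmt_9 {S : Type*} [MetricSpace S] [CompactSpace S] [Nonempty S]
    (u : S → S → ℝ) (hu : Continuous fun p : S × S => u p.1 p.2)
    (hET : ∃ Φ : S → ℝ, (∃ M : ℝ, ∀ x, |Φ x| ≤ M) ∧
      ∀ ε : ℝ, 0 < ε → ∃ δ : ℝ, 0 < δ ∧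
        ∀ x y : S, u y x - u x x > ε → Φ y - Φ x > δ) :
    ∃ xstar : S, ∀ y : S, u y xstar ≤ u xstar xstar := by
  obtain ⟨Φ, ⟨M, hM⟩, hΦ⟩ := hET
  have hseq : ∀ n : ℕ, ∃ x : S, ∀ y, u y x ≤ u x x + 1 / (n + 1) := by
    intro n
    obtain ⟨δ, hδ, h⟩ := hΦ (1 / (n + 1)) (by positivity)
    exact epsNash_aux u Φ M hM _ δ hδ h
  choose x hx using hseq
  obtain ⟨a, -, φ, hφ, hconv⟩ :=
    isCompact_univ.tendsto_subseq (fun n => Set.mem_univ (x n))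
  refine ⟨a, fun y => ?_⟩
  have hcy : Continuous fun z : S => u y z :=
    hu.comp (continuous_const.prodMk continuous_id)
  have hcd : Continuous fun z : S => u z z :=
    hu.comp (continuous_id.prodMk continuous_id)
  have h1 : Tendsto (fun n => u y (x (φ n))) atTop (𝓝 (u y a)) :=
    (hcy.continuousAt.tendsto).comp hconv
  have h0 : Tendsto (fun n => 1 / ((φ n : ℝ) + 1)) atTop (𝓝 0) :=
    tendsto_one_div_add_atTop_nhds_zero_nat.comp hφ.tendsto_atTop
  have h2 : Tendsto (fun n => u (x (φ n)) (x (φ n)) + 1 / ((φ n : ℝ) + 1)) atTop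
      (𝓝 (u a a + 0)) :=
    ((hcd.continuousAt.tendsto).comp hconv).add h0
  have := le_of_tendsto_of_tendsto' h1 h2 (fun n => hx (φ n) y)
  linarith
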